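/- The function z ↦ h(z)/z is strictly increasing on (0,∞), where h(z):=ũ(z/κ₁)−ũ(z)+ε₁z for z>z_S and h(z):=ũ(z/κ₂)−ũ(z)+ε₂z for 0<z≤z_S. -/

import Mathlib

open MeasureTheory

/-- z ↦ h(z)/z is strictly increasing on (0,∞), where h(z)=ũ(z/κ₁)−ũ(z)+ε₁z
for z>z_S and h(z)=ũ(z/κ₂)−ũ(z)+ε₂z for 0<z≤z_S. -/
theorem stmt_5
    (u u' I utld : ℝ → ℝ)
    (hu_mono : StrictMonoOn u (Set.Ici 0))
    (hu_conc : StrictConcaveOn ℝ (Set.Ici 0) u)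
    (hu_cont : ContinuousOn u (Set.Ici 0))
    (hu_deriv : ∀ c : ℝ, 0 < c → HasDerivAt u (u' c) c)
    (hu'_cont : ContinuousOn u' (Set.Ioi 0))
    (hu'_top : Filter.Tendsto u' Filter.atTop (nhds 0))
    (hu'_zero : Filter.Tendsto u' (nhdsWithin 0 (Set.Ioi 0)) Filter.atTop)
    (hI_pos : ∀ y : ℝ, 0 < y → 0 < I y)
    (hI_left : ∀ y : ℝ, 0 < y → u' (I y) = y)
    (hI_right : ∀ c : ℝ, 0 < c → I (u' c) = c)
    (hI_anti : StrictAntiOn I (Set.Ioi 0))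
    (hI_cont : ContinuousOn I (Set.Ioi 0))
    (hI_zero : Filter.Tendsto I (nhdsWithin 0 (Set.Ioi 0)) Filter.atTop)
    (hI_top : Filter.Tendsto I Filter.atTop (nhds 0))
    (hutld : ∀ y : ℝ, 0 < y → utld y = u (I y) - y * I y)
    (ε₁ ε₂ κ₁ κ₂ : ℝ)
    (hε₂ : 0 < ε₂) (hε₁₂ : ε₂ < ε₁)
    (hκ₁ : 0 < κ₁) (hκ₁₂ : κ₁ < κ₂) (hκ₂ : κ₂ < 1)
    (z_S : ℝ) (hzS_pos : 0 < z_S)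
    (hzS_zero : (1 / z_S) * (utld (z_S / κ₁) - utld (z_S / κ₂) + z_S * (ε₁ - ε₂)) = 0)
    (hzS_uniq : ∀ y : ℝ, 0 < y →
      (1 / y) * (utld (y / κ₁) - utld (y / κ₂) + y * (ε₁ - ε₂)) = 0 → y = z_S)
    (h : ℝ → ℝ)
    (hh₁ : ∀ z : ℝ, z_S < z → h z = utld (z / κ₁) - utld z + ε₁ * z)
    (hh₂ : ∀ z : ℝ, 0 < z → z ≤ z_S → h z = utld (z / κ₂) - utld z + ε₂ * z)
    :
    StrictMonoOn (fun z : ℝ => h z / z) (Set.Ioi 0) := by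
  -- convexify
  have hconv : ConvexOn ℝ (Set.Ici 0) (-u) := hu_conc.concaveOn.neg
  -- envelope inequality: for w, c > 0, u c - w * c ≤ u (I w) - w * I w
  have env : ∀ w c : ℝ, 0 < w → 0 < c → u c - w * c ≤ u (I w) - w * I w := by
    intro w c hw hc
    set a := I w with ha_def
    have ha : 0 < a := hI_pos w hw
    have hw' : u' a = w := hI_left w hw
    have hda : HasDerivAt (fun x => -u x) (-(u' a)) a := (hu_deriv a ha).neg
    rcases lt_trichotomy c a with hca | hca | hca
    · have hsl := hconv.slope_le_of_hasDerivAt (le_of_lt hc : c ∈ Set.Ici 0)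
        (le_of_lt ha : a ∈ Set.Ici 0) hca hda
      rw [slope_def_field] at hsl
      simp only [Pi.neg_apply] at hsl
      have h2 : (-u a - -u c) ≤ -(u' a) * (a - c) :=
        (div_le_iff₀ (by linarith)).mp hsl
      rw [hw'] at h2
      nlinarith
    · rw [hca]
    · have hsl := hconv.le_slope_of_hasDerivAt (le_of_lt ha : a ∈ Set.Ici 0)
        (le_of_lt hc : c ∈ Set.Ici 0) hca hda
      rw [slope_def_field] at hsl
      simp only [Pi.neg_apply] at hsl
      have h2 : -(u' a) * (c - a) ≤ (-u c - -u a) :=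
        (le_div_iff₀ (by linarith)).mp hsl
      rw [hw'] at h2
      nlinarith
  -- key inequality: utld y - (w - y) * I y ≤ utld w for y, w > 0
  have key : ∀ y w : ℝ, 0 < y → 0 < w → utld y - (w - y) * I y ≤ utld w := by
    intro y w hy hw
    rw [hutld y hy, hutld w hw]
    have := env w (I y) hw (hI_pos y hy)
    nlinarith
  -- derivative of utld
  have dutld : ∀ y : ℝ, 0 < y → HasDerivAt utld (-(I y)) y := by
    intro y hy
    rw [hasDerivAt_iff_tendsto_slope]
    have hIc : ContinuousAt I y := hI_cont.continuousAt (isOpen_Ioi.mem_nhds hy)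
    have hIt : Filter.Tendsto (fun w => -(I w)) (nhdsWithin y {y}ᶜ) (nhds (-(I y))) :=
      (hIc.neg.tendsto).mono_left nhdsWithin_le_nhds
    have hmin : Filter.Tendsto (fun w => min (-(I y)) (-(I w))) (nhdsWithin y {y}ᶜ)
        (nhds (-(I y))) := by
      have := (tendsto_const_nhds (x := -(I y)) (f := nhdsWithin y {y}ᶜ)).min hIt
      simpa using this
    have hmax : Filter.Tendsto (fun w => max (-(I y)) (-(I w))) (nhdsWithin y {y}ᶜ)
        (nhds (-(I y))) := by
      have := (tendsto_const_nhds (x := -(I y)) (f := nhdsWithin y {y}ᶜ)).max hIt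
      simpa using this
    have hmem : ∀ᶠ w in nhdsWithin y {y}ᶜ, w ∈ Set.Ioi (0:ℝ) :=
      ((isOpen_Ioi.eventually_mem hy).filter_mono nhdsWithin_le_nhds)
    refine tendsto_of_tendsto_of_tendsto_of_le_of_le' hmin hmax ?_ ?_
    · filter_upwards [hmem, self_mem_nhdsWithin] with w hw hne
      have hw : (0:ℝ) < w := hw
      have hne' : w ≠ y := hne
      rw [slope_def_field]
      rcases lt_or_gt_of_ne hne' with hlt | hgt
      · -- w < y : slope ≥ -(I w)
        have hk := key w y hw hy
        have hneg : w - y < 0 := by linarith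
        refine le_trans (min_le_right _ _) ?_
        rw [le_div_iff_of_neg hneg]
        nlinarith
      · -- w > y : slope ≥ -(I y)
        have hk := key y w hy hw
        have hpos : 0 < w - y := by linarith
        refine le_trans (min_le_left _ _) ?_
        rw [le_div_iff₀ hpos]
        nlinarith
    · filter_upwards [hmem, self_mem_nhdsWithin] with w hw hne
      have hw : (0:ℝ) < w := hw
      have hne' : w ≠ y := hne
      rw [slope_def_field]
      rcases lt_or_gt_of_ne hne' with hlt | hgt
      · -- w < y : slope ≤ -(I y)
        have hk := key y w hy hw
        have hneg : w - y < 0 := by linarith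
        refine le_trans ?_ (le_max_left _ _)
        rw [div_le_iff_of_neg hneg]
        nlinarith
      · -- w > y : slope ≤ -(I w)
        have hk := key w y hw hy
        have hpos : 0 < w - y := by linarith
        refine le_trans ?_ (le_max_right _ _)
        rw [div_le_iff₀ hpos]
        nlinarith
  -- strict monotonicity of z ↦ (utld (z/κ) - utld z)/z on (0,∞) for 0 < κ < 1
  have mono : ∀ κ : ℝ, 0 < κ → κ < 1 →
      StrictMonoOn (fun z : ℝ => (utld (z / κ) - utld z) / z) (Set.Ioi 0) := by
    intro κ hκ hκ1
    have hderiv : ∀ z ∈ Set.Ioi (0:ℝ),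
        HasDerivAt (fun z : ℝ => (utld (z / κ) - utld z) / z)
          (((-(I (z / κ)) * (1 / κ) - -(I z)) * z - (utld (z / κ) - utld z) * 1) / z ^ 2) z := by
      intro z hz
      have hz : (0:ℝ) < z := hz
      have hzκ : 0 < z / κ := div_pos hz hκ
      have hinner : HasDerivAt (fun x : ℝ => x / κ) (1 / κ) z := by
        simpa using (hasDerivAt_id z).div_const κ
      have h1 : HasDerivAt (fun x : ℝ => utld (x / κ)) (-(I (z / κ)) * (1 / κ)) z :=
        (dutld (z / κ) hzκ).comp z hinner
      have hnum := h1.sub (dutld z hz)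
      exact hnum.div (hasDerivAt_id z) (ne_of_gt hz)
    have hpos : ∀ z ∈ Set.Ioi (0:ℝ),
        0 < ((-(I (z / κ)) * (1 / κ) - -(I z)) * z - (utld (z / κ) - utld z) * 1) / z ^ 2 := by
      intro z hz
      have hz : (0:ℝ) < z := hz
      have hzκ : 0 < z / κ := div_pos hz hκ
      have hlt : z < z / κ := by
        rw [lt_div_iff₀ hκ]; nlinarith
      have hIlt : I (z / κ) < I z := hI_anti (Set.mem_Ioi.mpr hz) (Set.mem_Ioi.mpr hzκ) hlt
      have hk := key (z / κ) z hzκ hz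
      have hzk : z / κ * κ = z := div_mul_cancel₀ z (ne_of_gt hκ)
      apply div_pos _ (by positivity)
      have expand : (-(I (z / κ)) * (1 / κ) - -(I z)) * z - (utld (z / κ) - utld z) * 1
          = (z * I z - z * I (z / κ))
            + ((z - z / κ) * I (z / κ) - (utld (z / κ) - utld z)) := by
        field_simp
        ring
      rw [expand]
      have t1 : 0 < z * I z - z * I (z / κ) := by nlinarith [mul_pos hz (sub_pos.mpr hIlt)]
      linarith
    apply strictMonoOn_of_deriv_pos (convex_Ioi 0)
    · intro z hz
      exact (hderiv z hz).continuousAt.continuousWithinAt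
    · intro z hz
      rw [interior_Ioi] at hz
      rw [(hderiv z hz).deriv]
      exact hpos z hz
  -- the two pieces
  set g₁ : ℝ → ℝ := fun z => (utld (z / κ₁) - utld z) / z + ε₁ with hg₁_def
  set g₂ : ℝ → ℝ := fun z => (utld (z / κ₂) - utld z) / z + ε₂ with hg₂_def
  have hκ₂0 : 0 < κ₂ := lt_trans hκ₁ hκ₁₂
  have hκ₁1 : κ₁ < 1 := lt_trans hκ₁₂ hκ₂
  have hg₁ : StrictMonoOn g₁ (Set.Ioi 0) := by
    intro a ha b hb hab
    exact add_lt_add_left (mono κ₁ hκ₁ hκ₁1 ha hb hab) ε₁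
  have hg₂ : StrictMonoOn g₂ (Set.Ioi 0) := by
    intro a ha b hb hab
    exact add_lt_add_left (mono κ₂ hκ₂0 hκ₂ ha hb hab) ε₂
  -- equality at the junction
  have heq : g₁ z_S = g₂ z_S := by
    have hzne : z_S ≠ 0 := ne_of_gt hzS_pos
    have h0 : utld (z_S / κ₁) - utld (z_S / κ₂) + z_S * (ε₁ - ε₂) = 0 := by
      field_simp at hzS_zero
      linarith
    simp only [hg₁_def, hg₂_def]
    field_simp
    linarith
  -- representation of h z / z
  have hrep₁ : ∀ z : ℝ, 0 < z → z_S < z → h z / z = g₁ z := by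
    intro z hz hzS
    rw [hh₁ z hzS, hg₁_def]
    field_simp
  have hrep₂ : ∀ z : ℝ, 0 < z → z ≤ z_S → h z / z = g₂ z := by
    intro z hz hzS
    rw [hh₂ z hz hzS, hg₂_def]
    field_simp
  -- final assembly
  intro x hx y hy hxy
  have hx' : (0:ℝ) < x := hx
  have hy' : (0:ℝ) < y := hy
  simp only []
  rcases le_or_gt y z_S with hyz | hyz
  · rw [hrep₂ x hx' (le_of_lt (lt_of_lt_of_le hxy hyz)), hrep₂ y hy' hyz]
    exact hg₂ hx hy hxy
  · rcases le_or_gt x z_S with hxz | hxz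
    · rw [hrep₂ x hx' hxz, hrep₁ y hy' hyz]
      calc g₂ x ≤ g₂ z_S := hg₂.monotoneOn hx (Set.mem_Ioi.mpr hzS_pos) hxz
        _ = g₁ z_S := heq.symm
        _ < g₁ y := hg₁ (Set.mem_Ioi.mpr hzS_pos) hy hyz
    · rw [hrep₁ x hx' hxz, hrep₁ y hy' hyz]
      exact hg₁ hx hy hxy
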